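/- arXiv:2010.15959 — 6 statements merged into one kernel-verified Lean document; each statement's English description precedes it below -/
import Mathlib

section
/- Let d ≥ 3 and let x₁,…,x₈ ∈ ℝ^d be the special point set. Then for every m ≥ 1 and every choice of vectors w₁,…,w_m ∈ ℝ^d, the 8×m matrix E with entries E_{ij} = (xᵢᵀwⱼ)₊ has rank at most 7. -/
open MeasureTheory Matrix
open scoped InnerProductSpace Matrix.Norms.L2Operator

/-- The uniform probability measure on the unit sphere `S^{d-1} ⊆ ℝ^d`,
viewed as a measure on the ambient Euclidean space. -/
noncomputable def sphereUniform (d : ℕ) : Measure (EuclideanSpace ℝ (Fin d)) :=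
  (((volume : Measure (EuclideanSpace ℝ (Fin d))).toSphere Set.univ)⁻¹ •
    (volume : Measure (EuclideanSpace ℝ (Fin d))).toSphere).map Subtype.val

/-- Sign pattern of the special eight-point set. -/
noncomputable def sgn : Fin 8 → Fin 3 → ℝ :=
  ![![1,1,1], ![-1,1,1], ![1,-1,1], ![1,1,-1], ![-1,-1,1], ![-1,1,-1], ![1,-1,-1], ![-1,-1,-1]]

/-- The special point set `x₁, …, x₈ ∈ ℝ^d`: the first three coordinates are `±1/√3`
with the sign pattern `sgn`, and all remaining coordinates vanish. -/
noncomputable def pts (d : ℕ) (i : Fin 8) : Fin d → ℝ :=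
  fun j => if h : (j : ℕ) < 3 then (1 / Real.sqrt 3) * sgn i ⟨j, h⟩ else 0

/-- The special point set, viewed in Euclidean space. -/
noncomputable def ptsE (d : ℕ) (i : Fin 8) : EuclideanSpace ℝ (Fin d) :=
  (WithLp.equiv 2 (Fin d → ℝ)).symm (pts d i)

/-- Smallest eigenvalue of a real symmetric matrix, via the Rayleigh quotient. -/
noncomputable def lamMin {n : ℕ} (A : Matrix (Fin n) (Fin n) ℝ) : ℝ :=
  sInf {r | ∃ u : Fin n → ℝ, ∑ i, u i ^ 2 = 1 ∧ r = u ⬝ᵥ A.mulVec u}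

/-- Largest eigenvalue of a real symmetric matrix, via the Rayleigh quotient. -/
noncomputable def lamMax {n : ℕ} (A : Matrix (Fin n) (Fin n) ℝ) : ℝ :=
  sSup {r | ∃ u : Fin n → ℝ, ∑ i, u i ^ 2 = 1 ∧ r = u ⬝ᵥ A.mulVec u}

/-- Euclidean norm of a vector in `ℝ^n`. -/
noncomputable def e2 {n : ℕ} (v : Fin n → ℝ) : ℝ := Real.sqrt (∑ i, v i ^ 2)

/-- The vector `v = (1,−1,−1,−1,1,1,1,−1)`. -/
noncomputable def vv : Fin 8 → ℝ := ![1, -1, -1, -1, 1, 1, 1, -1]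


lemma sgn_rel (j : Fin 3) : sgn 7 j = -sgn 0 j ∧ sgn 6 j = -sgn 1 j ∧
    sgn 5 j = -sgn 2 j ∧ sgn 4 j = -sgn 3 j ∧ sgn 0 j = sgn 1 j + sgn 2 j + sgn 3 j := by
  fin_cases j <;> refine ⟨?_,?_,?_,?_,?_⟩ <;>
    first
     | rfl
     | exact (by norm_num : (1:ℝ) = -(-1:ℝ))
     | exact (by norm_num : (-1:ℝ) = -(1:ℝ))
     | exact (by norm_num : (1:ℝ) = (-1)+1+1)
     | exact (by norm_num : (1:ℝ) = 1+(-1)+1)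
     | exact (by norm_num : (1:ℝ) = 1+1+(-1))

lemma pts_rel (d : ℕ) : pts d 7 = -pts d 0 ∧ pts d 6 = -pts d 1 ∧
    pts d 5 = -pts d 2 ∧ pts d 4 = -pts d 3 ∧ pts d 0 = pts d 1 + pts d 2 + pts d 3 := by
  refine ⟨?_, ?_, ?_, ?_, ?_⟩ <;> funext j <;>
    simp only [pts, Pi.neg_apply, Pi.add_apply] <;> split_ifs with h <;>
    [skip; ring; skip; ring; skip; ring; skip; ring; skip; ring] <;>
    have := sgn_rel ⟨j, h⟩
  · rw [this.1]; ring
  · rw [this.2.1]; ring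
  · rw [this.2.2.1]; ring
  · rw [this.2.2.2.1]; ring
  · rw [this.2.2.2.2]; ring

lemma col_sum (d : ℕ) (v : Fin d → ℝ) :
    ∑ i, vv i * max (pts d i ⬝ᵥ v) 0 = 0 := by
  obtain ⟨h7, h6, h5, h4, h0⟩ := pts_rel d
  rw [Fin.sum_univ_eight]
  have e7 : pts d 7 ⬝ᵥ v = -(pts d 0 ⬝ᵥ v) := by rw [h7, neg_dotProduct]
  have e6 : pts d 6 ⬝ᵥ v = -(pts d 1 ⬝ᵥ v) := by rw [h6, neg_dotProduct]
  have e5 : pts d 5 ⬝ᵥ v = -(pts d 2 ⬝ᵥ v) := by rw [h5, neg_dotProduct]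
  have e4 : pts d 4 ⬝ᵥ v = -(pts d 3 ⬝ᵥ v) := by rw [h4, neg_dotProduct]
  have e0 : pts d 0 ⬝ᵥ v = pts d 1 ⬝ᵥ v + pts d 2 ⬝ᵥ v + pts d 3 ⬝ᵥ v := by
    rw [h0, add_dotProduct, add_dotProduct]
  rw [e7, e6, e5, e4,
    show vv 0 = 1 from rfl, show vv 1 = -1 from rfl, show vv 2 = -1 from rfl,
    show vv 3 = -1 from rfl, show vv 4 = 1 from rfl, show vv 5 = 1 from rfl,
    show vv 6 = 1 from rfl, show vv 7 = -1 from rfl]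
  have m0 := max_zero_sub_max_neg_zero_eq_self (pts d 0 ⬝ᵥ v)
  have m1 := max_zero_sub_max_neg_zero_eq_self (pts d 1 ⬝ᵥ v)
  have m2 := max_zero_sub_max_neg_zero_eq_self (pts d 2 ⬝ᵥ v)
  have m3 := max_zero_sub_max_neg_zero_eq_self (pts d 3 ⬝ᵥ v)
  linarith

/-- The linear functional `y ↦ vv ⬝ᵥ y`. -/
noncomputable def fvv : (Fin 8 → ℝ) →ₗ[ℝ] ℝ where
  toFun y := vv ⬝ᵥ y
  map_add' a b := dotProduct_add _ _ _
  map_smul' c a := by simp [dotProduct_smul]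

lemma fvv_apply (y : Fin 8 → ℝ) : fvv y = vv ⬝ᵥ y := rfl

lemma finrank_ker_fvv : Module.finrank ℝ (LinearMap.ker fvv) = 7 := by
  have hsurj : Function.Surjective fvv := by
    intro r
    refine ⟨r • (Pi.single 0 1 : Fin 8 → ℝ), ?_⟩
    simp [fvv_apply, dotProduct_smul, dotProduct_single, show vv 0 = 1 from rfl]
  have hr : LinearMap.range fvv = ⊤ := LinearMap.range_eq_top.2 hsurj
  have h := LinearMap.finrank_range_add_finrank_ker fvv
  rw [hr] at h
  simp only [finrank_top] at h
  have hd : Module.finrank ℝ (Fin 8 → ℝ) = 8 := by simp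
  have h1 : Module.finrank ℝ ℝ = 1 := Module.finrank_self ℝ
  omega

/-- for `d ≥ 3`, any `m ≥ 1` and any `w₁,…,w_m ∈ ℝ^d`, the `8 × m`
matrix `E` with `E_{ij} = (xᵢᵀ wⱼ)₊` has rank at most `7`. -/
theorem stmt_0 (d m : ℕ) (hd : 3 ≤ d) (hm : 1 ≤ m) (w : Fin m → Fin d → ℝ) :
    (Matrix.of fun (i : Fin 8) (j : Fin m) => max (pts d i ⬝ᵥ w j) 0).rank ≤ 7 := by
  set E : Matrix (Fin 8) (Fin m) ℝ :=
    Matrix.of fun (i : Fin 8) (j : Fin m) => max (pts d i ⬝ᵥ w j) 0 with hE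
  have hsub : LinearMap.range E.mulVecLin ≤ LinearMap.ker fvv := by
    rintro y ⟨u, rfl⟩
    have hcol : vv ᵥ* E = 0 := by
      funext j
      simpa [Matrix.vecMul, dotProduct, hE] using col_sum d (w j)
    rw [LinearMap.mem_ker, Matrix.mulVecLin_apply, fvv_apply,
      Matrix.dotProduct_mulVec, hcol, zero_dotProduct]
  calc E.rank = Module.finrank ℝ (LinearMap.range E.mulVecLin) := rfl
    _ ≤ Module.finrank ℝ (LinearMap.ker fvv) := Submodule.finrank_mono hsub
    _ = 7 := finrank_ker_fvv
end

section
/- Let d ≥ 3, let x₁,…,x₈ ∈ ℝ^d be the special point set, and let v = (1,−1,−1,−1,1,1,1,−1) ∈ ℝ⁸. Then for every w ∈ ℝ^d, the identity ∑_{i=1}^{8} vᵢ (wᵀxᵢ)₊ = 0 holds. -/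
open MeasureTheory Matrix
open scoped InnerProductSpace Matrix.Norms.L2Operator

private lemma cv5 {α : Type*} (a b c d e f g h : α) : ![a,b,c,d,e,f,g,h] 5 = f := rfl
private lemma cv6 {α : Type*} (a b c d e f g h : α) : ![a,b,c,d,e,f,g,h] 6 = g := rfl
private lemma cv7 {α : Type*} (a b c d e f g h : α) : ![a,b,c,d,e,f,g,h] 7 = h := rfl

/-- for `d ≥ 3` and every `w ∈ ℝ^d`, `∑ᵢ vᵢ (wᵀxᵢ)₊ = 0`. -/
theorem stmt_1 (d : ℕ) (hd : 3 ≤ d) (w : Fin d → ℝ) :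
    ∑ i : Fin 8, vv i * max (w ⬝ᵥ pts d i) 0 = 0 := by
  have hsgn : ∀ j : Fin d, ∀ h : (j:ℕ) < 3,
      (sgn 0 ⟨j,h⟩ = sgn 1 ⟨j,h⟩ + sgn 2 ⟨j,h⟩ + sgn 3 ⟨j,h⟩) ∧
      sgn 4 ⟨j,h⟩ = - sgn 3 ⟨j,h⟩ ∧ sgn 5 ⟨j,h⟩ = - sgn 2 ⟨j,h⟩ ∧
      sgn 6 ⟨j,h⟩ = - sgn 1 ⟨j,h⟩ ∧ sgn 7 ⟨j,h⟩ = - sgn 0 ⟨j,h⟩ := by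
    intro j h
    interval_cases hj : (j : ℕ) <;> simp [sgn, Matrix.vecHead, Matrix.vecTail] <;> norm_num
  have hneg : ∀ i i' : Fin 8, (∀ (j : Fin d) (h3 : (j:ℕ) < 3), sgn i ⟨j,h3⟩ = - sgn i' ⟨j, h3⟩) →
      pts d i = fun j => - pts d i' j := by
    intro i i' hs
    funext j
    simp only [pts]
    split_ifs with h
    · rw [hs j h]; ring
    · ring
  have h4 : pts d 4 = fun j => - pts d 3 j := hneg _ _ (fun j h3 => (hsgn _ _).2.1)
  have h5 : pts d 5 = fun j => - pts d 2 j := hneg _ _ (fun j h3 => (hsgn _ _).2.2.1)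
  have h6 : pts d 6 = fun j => - pts d 1 j := hneg _ _ (fun j h3 => (hsgn _ _).2.2.2.1)
  have h7 : pts d 7 = fun j => - pts d 0 j := hneg _ _ (fun j h3 => (hsgn _ _).2.2.2.2)
  have h0 : pts d 0 = fun j => pts d 1 j + pts d 2 j + pts d 3 j := by
    funext j
    simp only [pts]
    split_ifs with h
    · rw [(hsgn j h).1]; ring
    · ring
  set a1 := w ⬝ᵥ pts d 1 with ha1
  set a2 := w ⬝ᵥ pts d 2 with ha2
  set a3 := w ⬝ᵥ pts d 3 with ha3
  have e0 : w ⬝ᵥ pts d 0 = a1 + a2 + a3 := by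
    rw [h0, ha1, ha2, ha3]
    simp [dotProduct, Finset.sum_add_distrib, mul_add]
  have e4 : w ⬝ᵥ pts d 4 = -a3 := by
    rw [h4, ha3]; simp [dotProduct, ← Finset.sum_neg_distrib]
  have e5 : w ⬝ᵥ pts d 5 = -a2 := by
    rw [h5, ha2]; simp [dotProduct, ← Finset.sum_neg_distrib]
  have e6 : w ⬝ᵥ pts d 6 = -a1 := by
    rw [h6, ha1]; simp [dotProduct, ← Finset.sum_neg_distrib]
  have e7 : w ⬝ᵥ pts d 7 = -(a1 + a2 + a3) := by
    rw [h7, ← e0]; simp [dotProduct, ← Finset.sum_neg_distrib]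
  rw [Fin.sum_univ_eight, e0, e4, e5, e6, e7]
  simp only [vv, Matrix.cons_val_zero, Matrix.cons_val_one, Matrix.head_cons,
    Matrix.cons_val_two, Matrix.cons_val_three, Matrix.cons_val_four, cv5, cv6, cv7,
    Matrix.tail_cons]
  have key : ∀ x : ℝ, max x 0 - max (-x) 0 = x := fun x => max_zero_sub_max_neg_zero_eq_self x
  have k1 := key a1
  have k2 := key a2
  have k3 := key a3
  have k0 := key (a1 + a2 + a3)
  have : -a3 + (-a2 + -a1) = -(a1+a2+a3) := by ring
  nlinarith [k0, k1, k2, k3]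
end

section
/- Let d ≥ 3, n ≥ 8, and let X ∈ ℝ^{d×n} be any matrix whose first eight columns are the special point set x₁,…,x₈ (the remaining columns arbitrary). Define q ∈ ℝⁿ by q = (1,−1,−1,−1,1,1,1,−1,0,…,0). Then q ≠ 0, and for every y ∈ ℝⁿ with yᵀq ≠ 0, every m ≥ 1, every weight matrix W ∈ ℝ^{d×m}, and every α ∈ ℝ^m, one has m^{−1/2}(XᵀW)₊ α ≠ y, where (·)₊ is applied entrywise; in particular the training loss ‖m^{−1/2}(XᵀW)₊ α − y‖₂² is strictly positive for all choices of W and α. -/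
open MeasureTheory Matrix
open scoped InnerProductSpace Matrix.Norms.L2Operator

lemma relu_half (z : ℝ) : max z 0 = (z + |z|)/2 := by
  rcases le_or_gt 0 z with h | h
  · rw [max_eq_left h, abs_of_nonneg h]; ring
  · rw [max_eq_right h.le, abs_of_neg h]; ring

lemma key (A B C : ℝ) :
    max (A+B+C) 0 - max (-A+B+C) 0 - max (A-B+C) 0 - max (A+B-C) 0
    + max (-A-B+C) 0 + max (-A+B-C) 0 + max (A-B-C) 0 - max (-A-B-C) 0 = 0 := by
  simp only [relu_half]
  rw [show (-A-B-C : ℝ) = -(A+B+C) by ring, abs_neg,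
     show (A-B-C : ℝ) = -(-A+B+C) by ring, abs_neg,
     show (-A+B-C : ℝ) = -(A-B+C) by ring, abs_neg,
     show (-A-B+C : ℝ) = -(A+B-C) by ring, abs_neg]
  ring

/-- if the first eight columns of `X` form the special point set and
`yᵀq ≠ 0` for `q = (1,−1,−1,−1,1,1,1,−1,0,…,0)`, then no width-`m` bias-free ReLU
network output `m^{-1/2} (XᵀW)₊ α` can equal `y`; in particular the training loss
is strictly positive for all `W, α`. -/
theorem stmt_2 (d n : ℕ) (hd : 3 ≤ d) (hn : 8 ≤ n)
    (X : Matrix (Fin d) (Fin n) ℝ)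
    (hX : ∀ (i : Fin 8) (j : Fin d), X j ⟨(i : ℕ), lt_of_lt_of_le i.isLt hn⟩ = pts d i j)
    (q : Fin n → ℝ)
    (hq : q = fun i : Fin n => if h : i.val < 8 then vv ⟨i.val, h⟩ else 0) :
    q ≠ 0 ∧
    ∀ (y : Fin n → ℝ), y ⬝ᵥ q ≠ 0 → ∀ (m : ℕ), 1 ≤ m →
      ∀ (W : Matrix (Fin d) (Fin m) ℝ) (α : Fin m → ℝ),
        ((1 / Real.sqrt m) • ((Xᵀ * W).map fun z => max z 0)).mulVec α ≠ y ∧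
        0 < ∑ i, (((1 / Real.sqrt m) • ((Xᵀ * W).map fun z => max z 0)).mulVec α i - y i) ^ 2 := by

  subst hq
  constructor
  · intro h0
    have := congrFun h0 (Fin.castLE hn 0)
    simp [vv] at this
  intro y hy m hm W α
  set F : Fin n → ℝ := ((1 / Real.sqrt m) • ((Xᵀ * W).map fun z => max z 0)).mulVec α with hF
  have hcol : ∀ (i : Fin 8) (k : Fin m), (Xᵀ * W) (Fin.castLE hn i) k
      = (1/Real.sqrt 3) * (sgn i 0 * W (Fin.castLE hd 0) k + sgn i 1 * W (Fin.castLE hd 1) k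
        + sgn i 2 * W (Fin.castLE hd 2) k) := by
    intro i k
    rw [Matrix.mul_apply]
    simp only [Matrix.transpose_apply]
    have h1 : ∀ j : Fin d, X j (Fin.castLE hn i) = pts d i j := fun j => hX i j
    simp only [h1]
    have emb : Function.Injective (Fin.castLE hd) := Fin.castLE_injective hd
    rw [← Finset.sum_subset (Finset.subset_univ (Finset.univ.map ⟨Fin.castLE hd, emb⟩))
        (fun x _ hx => by
          have hx3 : ¬ (x : ℕ) < 3 := by
            intro h3
            exact hx (Finset.mem_map.2 ⟨⟨(x : ℕ), h3⟩, Finset.mem_univ _, rfl⟩)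
          simp [pts, hx3]),
      Finset.sum_map]
    simp only [Function.Embedding.coeFn_mk]
    rw [Fin.sum_univ_three]
    norm_num [pts, show ((⟨2, by norm_num⟩ : Fin 3)) = 2 from rfl]
    ring
  -- per-hidden-unit cancellation
  have keyk : ∀ k : Fin m, ∑ i : Fin 8, vv i * max ((Xᵀ * W) (Fin.castLE hn i) k) 0 = 0 := by
    intro k
    rw [Fin.sum_univ_eight]
    simp only [hcol]
    simp only [show sgn 0 0 = (1:ℝ) from rfl, show sgn 0 1 = (1:ℝ) from rfl, show sgn 0 2 = (1:ℝ) from rfl, show sgn 1 0 = (-1:ℝ) from rfl, show sgn 1 1 = (1:ℝ) from rfl, show sgn 1 2 = (1:ℝ) from rfl, show sgn 2 0 = (1:ℝ) from rfl, show sgn 2 1 = (-1:ℝ) from rfl, show sgn 2 2 = (1:ℝ) from rfl, show sgn 3 0 = (1:ℝ) from rfl, show sgn 3 1 = (1:ℝ) from rfl, show sgn 3 2 = (-1:ℝ) from rfl, show sgn 4 0 = (-1:ℝ) from rfl, show sgn 4 1 = (-1:ℝ) from rfl, show sgn 4 2 = (1:ℝ) from rfl, show sgn 5 0 = (-1:ℝ)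 from rfl, show sgn 5 1 = (1:ℝ) from rfl, show sgn 5 2 = (-1:ℝ) from rfl, show sgn 6 0 = (1:ℝ) from rfl, show sgn 6 1 = (-1:ℝ) from rfl, show sgn 6 2 = (-1:ℝ) from rfl, show sgn 7 0 = (-1:ℝ) from rfl, show sgn 7 1 = (-1:ℝ) from rfl, show sgn 7 2 = (-1:ℝ) from rfl, show vv 0 = (1:ℝ) from rfl, show vv 1 = (-1:ℝ) from rfl, show vv 2 = (-1:ℝ) from rfl, show vv 3 = (-1:ℝ) from rfl, show vv 4 = (1:ℝ) from rfl, show vv 5 = (1:ℝ) from rfl, show vv 6 = (1:ℝ) from rfl, show vv 7 = (-1:ℝ) from rfl]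
    norm_num
    set a := W (Fin.castLE hd 0) k with ha
    set b := W (Fin.castLE hd 1) k with hb
    set c := W (Fin.castLE hd 2) k with hc
    rw [show (Real.sqrt 3)⁻¹*(a + b + c) = (Real.sqrt 3)⁻¹*a+(Real.sqrt 3)⁻¹*b+(Real.sqrt 3)⁻¹*c by ring, show (Real.sqrt 3)⁻¹*(-a + b + c) = -((Real.sqrt 3)⁻¹*a)+(Real.sqrt 3)⁻¹*b+(Real.sqrt 3)⁻¹*c by ring, show (Real.sqrt 3)⁻¹*(a + -b + c) = (Real.sqrt 3)⁻¹*a-((Real.sqrt 3)⁻¹*b)+(Real.sqrt 3)⁻¹*c by ring, show (Real.sqrt 3)⁻¹*(a + b + -c) = (Real.sqrt 3)⁻¹*a+(Real.sqrt 3)⁻¹*b-((Real.sqrt 3)⁻¹*c) by ring, show (Real.sqrt 3)⁻¹*(-a + -b + c) = -((Real.sqrt 3)⁻¹*a)-((Real.sqrt 3)⁻¹*b)+(Real.sqrt 3)⁻¹*c by ring, show (Real.sqrt 3)⁻¹*(-a + b + -c) = -((Real.sqrt 3)⁻¹*a)+(Real.sqrt 3)⁻¹*b-((Real.sqrt 3)⁻¹*c)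 by ring, show (Real.sqrt 3)⁻¹*(a + -b + -c) = (Real.sqrt 3)⁻¹*a-((Real.sqrt 3)⁻¹*b)-((Real.sqrt 3)⁻¹*c) by ring, show (Real.sqrt 3)⁻¹*(-a + -b + -c) = -((Real.sqrt 3)⁻¹*a)-((Real.sqrt 3)⁻¹*b)-((Real.sqrt 3)⁻¹*c) by ring]
    linarith [key ((Real.sqrt 3)⁻¹*a) ((Real.sqrt 3)⁻¹*b) ((Real.sqrt 3)⁻¹*c)]
  -- the output is orthogonal to q
  have horth : F ⬝ᵥ (fun i : Fin n => if h : i.val < 8 then vv ⟨i.val, h⟩ else 0) = 0 := by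
    rw [dotProduct]
    have emb : Function.Injective (Fin.castLE hn) := Fin.castLE_injective hn
    rw [← Finset.sum_subset (Finset.subset_univ (Finset.univ.map ⟨Fin.castLE hn, emb⟩))
        (fun x _ hx => by
          have hx8 : ¬ (x : ℕ) < 8 := by
            intro h8
            exact hx (Finset.mem_map.2 ⟨⟨(x : ℕ), h8⟩, Finset.mem_univ _, rfl⟩)
          simp [hx8]),
      Finset.sum_map]
    simp only [Function.Embedding.coeFn_mk, Fin.coe_castLE, Fin.is_lt, dif_pos, Fin.eta]
    have hFi : ∀ i : Fin 8, F (Fin.castLE hn i)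
        = (1 / Real.sqrt m) * ∑ k, max ((Xᵀ * W) (Fin.castLE hn i) k) 0 * α k := by
      intro i
      rw [hF, Matrix.mulVec, dotProduct]
      simp [Matrix.smul_apply, Matrix.map_apply, Finset.mul_sum, mul_assoc]
    calc ∑ i : Fin 8, F (Fin.castLE hn i) * vv i
        = ∑ i : Fin 8, ∑ k, (1 / Real.sqrt m) * α k * (vv i * max ((Xᵀ * W) (Fin.castLE hn i) k) 0) := by
          refine Finset.sum_congr rfl fun i _ => ?_
          rw [hFi i, Finset.mul_sum, Finset.sum_mul]
          exact Finset.sum_congr rfl fun k _ => by ring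
      _ = ∑ k, ∑ i : Fin 8, (1 / Real.sqrt m) * α k * (vv i * max ((Xᵀ * W) (Fin.castLE hn i) k) 0) :=
          Finset.sum_comm
      _ = ∑ k : Fin m, (0:ℝ) := by
          refine Finset.sum_congr rfl fun k _ => ?_
          rw [← Finset.mul_sum, keyk k, mul_zero]
      _ = 0 := by simp
  have hne : F ≠ y := by
    intro hFy
    rw [hFy] at horth
    exact hy horth
  refine ⟨hne, ?_⟩
  by_contra hle
  push_neg at hle
  have hz : ∑ i, (F i - y i) ^ 2 = 0 :=
    le_antisymm hle (Finset.sum_nonneg fun i _ => sq_nonneg _)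
  have : ∀ i ∈ Finset.univ, (F i - y i) ^ 2 = 0 :=
    (Finset.sum_eq_zero_iff_of_nonneg fun i _ => sq_nonneg _).1 hz
  exact hne (funext fun i => by have := this i (Finset.mem_univ i); nlinarith [this])
end

section
/- Let d ≥ 3 and let x₁,…,x₈ ∈ ℝ^d be the special point set. Define the 8×8 neural tangent kernel matrix G by G_{ij} = ∫_{S^{d−1}} xᵢᵀxⱼ · 1_{xᵢᵀw>0} · 1_{wᵀxⱼ>0} dσ(w), where 1_{z>0} equals 1 if z > 0 and 0 otherwise. Then Gv = 0 for the nonzero vector v = (1,−1,−1,−1,1,1,1,−1); in particular G is singular. -/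
open MeasureTheory Matrix
open scoped InnerProductSpace Matrix.Norms.L2Operator

section Aux

open scoped Pointwise

lemma pair_aux (d : ℕ) (a b : Fin 8) (hs : ∀ k, sgn a k = - sgn b k) : ptsE d a = - ptsE d b := by
  ext j
  show pts d a j = (-(ptsE d b)) j
  rw [PiLp.neg_apply]
  show pts d a j = - pts d b j
  unfold pts
  by_cases h : (j:ℕ) < 3
  · simp only [dif_pos h]; rw [hs]; ring
  · simp [h]

lemma ptsE_pair7 (d : ℕ) : ptsE d 7 = - ptsE d 0 :=
  pair_aux d 7 0 (by intro k; fin_cases k <;> first | rfl | exact (neg_neg 1).symm)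
lemma ptsE_pair6 (d : ℕ) : ptsE d 6 = - ptsE d 1 :=
  pair_aux d 6 1 (by intro k; fin_cases k <;> first | rfl | exact (neg_neg 1).symm)
lemma ptsE_pair5 (d : ℕ) : ptsE d 5 = - ptsE d 2 :=
  pair_aux d 5 2 (by intro k; fin_cases k <;> first | rfl | exact (neg_neg 1).symm)
lemma ptsE_pair4 (d : ℕ) : ptsE d 4 = - ptsE d 3 :=
  pair_aux d 4 3 (by intro k; fin_cases k <;> first | rfl | exact (neg_neg 1).symm)

lemma ptsE_sum (d : ℕ) : ptsE d 0 = ptsE d 1 + ptsE d 2 + ptsE d 3 := by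
  ext j
  show pts d 0 j = (ptsE d 1 + ptsE d 2 + ptsE d 3) j
  rw [PiLp.add_apply, PiLp.add_apply]
  show pts d 0 j = pts d 1 j + pts d 2 j + pts d 3 j
  unfold pts
  by_cases h : (j:ℕ) < 3
  · simp only [dif_pos h]
    have : ∀ k, sgn 0 k = sgn 1 k + sgn 2 k + sgn 3 k := by
      intro k; fin_cases k
      · show (1:ℝ) = -1 + 1 + 1; norm_num
      · show (1:ℝ) = 1 + -1 + 1; norm_num
      · show (1:ℝ) = 1 + 1 + -1; norm_num
    rw [this]; ring
  · simp [h]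

lemma ptsE_ne (d : ℕ) (hd : 3 ≤ d) (i : Fin 8) : ptsE d i ≠ 0 := by
  intro h
  have h0 : (0:ℕ) < d := by omega
  have hz : pts d i ⟨0, h0⟩ = 0 := congrArg (fun v : EuclideanSpace ℝ (Fin d) => v ⟨0, h0⟩) h
  unfold pts at hz
  rw [dif_pos (by norm_num : ((⟨0,h0⟩ : Fin d) : ℕ) < 3)] at hz
  have hs : sgn i ⟨0, by norm_num⟩ ≠ 0 := by fin_cases i <;> norm_num [sgn]
  have h13 : (1 / Real.sqrt 3) ≠ 0 := by positivity
  exact (mul_ne_zero h13 hs) hz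

instance sphereUniform_finite (d : ℕ) : IsFiniteMeasure (sphereUniform d) := by
  constructor
  rw [sphereUniform, Measure.map_apply measurable_subtype_coe MeasurableSet.univ]
  simp only [Set.preimage_univ, Measure.smul_apply, smul_eq_mul]
  rcases eq_or_ne ((volume : Measure (EuclideanSpace ℝ (Fin d))).toSphere Set.univ) 0 with h|h
  · simp [h]
  · rw [ENNReal.inv_mul_cancel h (measure_ne_top _ _)]; exact ENNReal.one_lt_top

lemma sphereUniform_hyperplane (d : ℕ) (x : EuclideanSpace ℝ (Fin d)) (hx : x ≠ 0) :
    sphereUniform d {w | ⟪w, x⟫_ℝ = 0} = 0 := by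
  have hcont : Continuous fun w : EuclideanSpace ℝ (Fin d) => ⟪w, x⟫_ℝ :=
    continuous_id.inner continuous_const
  have hA : MeasurableSet {w : EuclideanSpace ℝ (Fin d) | ⟪w, x⟫_ℝ = 0} :=
    (isClosed_eq hcont continuous_const).measurableSet
  set K : Submodule ℝ (EuclideanSpace ℝ (Fin d)) := LinearMap.ker (innerSL ℝ x : EuclideanSpace ℝ (Fin d) →ₗ[ℝ] ℝ) with hK
  have hKset : {w : EuclideanSpace ℝ (Fin d) | ⟪w, x⟫_ℝ = 0}
      = (K : Set (EuclideanSpace ℝ (Fin d))) := by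
    ext w
    simp [hK, LinearMap.mem_ker, real_inner_comm, mul_comm]
  have hKtop : K ≠ ⊤ := by
    intro h
    have hxK : x ∈ K := h ▸ Submodule.mem_top
    have : ⟪x, x⟫_ℝ = 0 := hxK
    exact hx (inner_self_eq_zero.mp this)
  have hvol : volume (K : Set (EuclideanSpace ℝ (Fin d))) = 0 :=
    Measure.addHaar_submodule volume K hKtop
  rw [sphereUniform, Measure.map_apply measurable_subtype_coe hA, Measure.smul_apply,
    Measure.toSphere_apply' _ (measurable_subtype_coe hA)]
  have hsub : (Set.Ioo (0:ℝ) 1) • (Subtype.val '' ((Subtype.val :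
      (Metric.sphere (0:EuclideanSpace ℝ (Fin d)) 1) → EuclideanSpace ℝ (Fin d)) ⁻¹'
      {w : EuclideanSpace ℝ (Fin d) | ⟪w, x⟫_ℝ = 0}))
      ⊆ (K : Set (EuclideanSpace ℝ (Fin d))) := by
    rintro z ⟨r, hr, w, hw, rfl⟩
    obtain ⟨u, hu, rfl⟩ := hw
    have : (u : EuclideanSpace ℝ (Fin d)) ∈ K := hKset.subset hu
    exact K.smul_mem r this
  have h0 : volume ((Set.Ioo (0:ℝ) 1) • (Subtype.val '' ((Subtype.val :
      (Metric.sphere (0:EuclideanSpace ℝ (Fin d)) 1) → EuclideanSpace ℝ (Fin d)) ⁻¹'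
      {w : EuclideanSpace ℝ (Fin d) | ⟪w, x⟫_ℝ = 0}))) = 0 :=
    measure_mono_null hsub hvol
  rw [h0]
  simp

lemma sphereUniform_ae (d : ℕ) (x : EuclideanSpace ℝ (Fin d)) (hx : x ≠ 0) :
    ∀ᵐ w ∂(sphereUniform d), ⟪w, x⟫_ℝ ≠ 0 := by
  rw [MeasureTheory.ae_iff]
  simpa using sphereUniform_hyperplane d x hx

lemma ind_neg {t : ℝ} (ht : t ≠ 0) :
    (if 0 < -t then (1:ℝ) else 0) = 1 - (if 0 < t then (1:ℝ) else 0) := by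
  rcases ht.lt_or_gt with h|h
  · rw [if_pos (by linarith), if_neg (by linarith)]; norm_num
  · rw [if_neg (by linarith), if_pos h]; norm_num

lemma pointwise_zero (d : ℕ) (i : Fin 8) (w : EuclideanSpace ℝ (Fin d))
    (h0 : ⟪w, ptsE d 0⟫_ℝ ≠ 0) (h1 : ⟪w, ptsE d 1⟫_ℝ ≠ 0)
    (h2 : ⟪w, ptsE d 2⟫_ℝ ≠ 0) (h3 : ⟪w, ptsE d 3⟫_ℝ ≠ 0) :
    ∑ j : Fin 8, ⟪ptsE d i, ptsE d j⟫_ℝ *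
      ((if 0 < ⟪ptsE d i, w⟫_ℝ then (1:ℝ) else 0) *
        (if 0 < ⟪w, ptsE d j⟫_ℝ then (1:ℝ) else 0)) * vv j = 0 := by
  have hc : ⟪ptsE d i, ptsE d 0⟫_ℝ
      = ⟪ptsE d i, ptsE d 1⟫_ℝ + ⟪ptsE d i, ptsE d 2⟫_ℝ + ⟪ptsE d i, ptsE d 3⟫_ℝ := by
    rw [ptsE_sum d, inner_add_right, inner_add_right]
  have hc7 : ⟪ptsE d i, ptsE d 7⟫_ℝ = -⟪ptsE d i, ptsE d 0⟫_ℝ := by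
    rw [ptsE_pair7 d, inner_neg_right]
  have hc6 : ⟪ptsE d i, ptsE d 6⟫_ℝ = -⟪ptsE d i, ptsE d 1⟫_ℝ := by
    rw [ptsE_pair6 d, inner_neg_right]
  have hc5 : ⟪ptsE d i, ptsE d 5⟫_ℝ = -⟪ptsE d i, ptsE d 2⟫_ℝ := by
    rw [ptsE_pair5 d, inner_neg_right]
  have hc4 : ⟪ptsE d i, ptsE d 4⟫_ℝ = -⟪ptsE d i, ptsE d 3⟫_ℝ := by
    rw [ptsE_pair4 d, inner_neg_right]
  have hB7 : (if 0 < ⟪w, ptsE d 7⟫_ℝ then (1:ℝ) else 0)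
      = 1 - (if 0 < ⟪w, ptsE d 0⟫_ℝ then (1:ℝ) else 0) := by
    simp only [ptsE_pair7 d, inner_neg_right]; exact ind_neg h0
  have hB6 : (if 0 < ⟪w, ptsE d 6⟫_ℝ then (1:ℝ) else 0)
      = 1 - (if 0 < ⟪w, ptsE d 1⟫_ℝ then (1:ℝ) else 0) := by
    simp only [ptsE_pair6 d, inner_neg_right]; exact ind_neg h1
  have hB5 : (if 0 < ⟪w, ptsE d 5⟫_ℝ then (1:ℝ) else 0)
      = 1 - (if 0 < ⟪w, ptsE d 2⟫_ℝ then (1:ℝ) else 0) := by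
    simp only [ptsE_pair5 d, inner_neg_right]; exact ind_neg h2
  have hB4 : (if 0 < ⟪w, ptsE d 4⟫_ℝ then (1:ℝ) else 0)
      = 1 - (if 0 < ⟪w, ptsE d 3⟫_ℝ then (1:ℝ) else 0) := by
    simp only [ptsE_pair4 d, inner_neg_right]; exact ind_neg h3
  rw [Fin.sum_univ_eight, hc7, hc6, hc5, hc4, hB7, hB6, hB5, hB4,
    show vv 0 = 1 from rfl, show vv 1 = -1 from rfl, show vv 2 = -1 from rfl,
    show vv 3 = -1 from rfl, show vv 4 = 1 from rfl, show vv 5 = 1 from rfl,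
    show vv 6 = 1 from rfl, show vv 7 = -1 from rfl]
  linear_combination (if 0 < ⟪ptsE d i, w⟫_ℝ then (1:ℝ) else 0) * hc

lemma ind_integrable (d : ℕ) (x y : EuclideanSpace ℝ (Fin d)) :
    Integrable (fun w => (if 0 < ⟪x, w⟫_ℝ then (1:ℝ) else 0) *
      (if 0 < ⟪w, y⟫_ℝ then (1:ℝ) else 0)) (sphereUniform d) := by
  have m1 : Measurable fun w : EuclideanSpace ℝ (Fin d) =>
      if 0 < ⟪x, w⟫_ℝ then (1:ℝ) else 0 :=
    Measurable.ite (measurableSet_lt measurable_const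
      (continuous_const.inner continuous_id).measurable) measurable_const measurable_const
  have m2 : Measurable fun w : EuclideanSpace ℝ (Fin d) =>
      if 0 < ⟪w, y⟫_ℝ then (1:ℝ) else 0 :=
    Measurable.ite (measurableSet_lt measurable_const
      (continuous_id.inner continuous_const).measurable) measurable_const measurable_const
  refine Integrable.mono' (integrable_const 1) ((m1.mul m2).aestronglyMeasurable)
    (Filter.Eventually.of_forall fun w => ?_)
  simp only [norm_mul, Real.norm_eq_abs]
  split_ifs <;> norm_num

end Aux

/-- with the special point set, the population NTK matrix
`G_{ij} = ∫_{S^{d−1}} xᵢᵀxⱼ · 1_{xᵢᵀw>0} · 1_{wᵀxⱼ>0} dσ(w)` satisfies `Gv = 0`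
for the nonzero vector `v = (1,−1,−1,−1,1,1,1,−1)`; in particular `G` is singular. -/
theorem stmt_6 (d : ℕ) (hd : 3 ≤ d)
    (G : Matrix (Fin 8) (Fin 8) ℝ)
    (hG : G = Matrix.of fun i j =>
      ∫ w, ⟪ptsE d i, ptsE d j⟫_ℝ *
        ((if 0 < ⟪ptsE d i, w⟫_ℝ then (1 : ℝ) else 0) *
          (if 0 < ⟪w, ptsE d j⟫_ℝ then (1 : ℝ) else 0)) ∂(sphereUniform d)) :
    vv ≠ 0 ∧ G.mulVec vv = 0 ∧ G.det = 0 := by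
  have hvne : vv ≠ 0 := by
    intro h
    have := congrFun h 0
    rw [show vv 0 = 1 from rfl] at this
    simpa using this
  have hmv : G.mulVec vv = 0 := by
    funext i
    simp only [Pi.zero_apply]
    have hFint : ∀ j : Fin 8, Integrable (fun w => ⟪ptsE d i, ptsE d j⟫_ℝ *
        ((if 0 < ⟪ptsE d i, w⟫_ℝ then (1:ℝ) else 0) *
          (if 0 < ⟪w, ptsE d j⟫_ℝ then (1:ℝ) else 0)) * vv j) (sphereUniform d) :=
      fun j => ((ind_integrable d _ _).const_mul _).mul_const _
    calc G.mulVec vv i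
        = ∑ j : Fin 8, (∫ w, ⟪ptsE d i, ptsE d j⟫_ℝ *
            ((if 0 < ⟪ptsE d i, w⟫_ℝ then (1:ℝ) else 0) *
              (if 0 < ⟪w, ptsE d j⟫_ℝ then (1:ℝ) else 0)) ∂(sphereUniform d)) * vv j := by
          rw [hG]; rfl
      _ = ∑ j : Fin 8, ∫ w, ⟪ptsE d i, ptsE d j⟫_ℝ *
            ((if 0 < ⟪ptsE d i, w⟫_ℝ then (1:ℝ) else 0) *
              (if 0 < ⟪w, ptsE d j⟫_ℝ then (1:ℝ) else 0)) * vv j ∂(sphereUniform d) :=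
          Finset.sum_congr rfl fun j _ => (integral_mul_const _ _).symm
      _ = ∫ w, ∑ j : Fin 8, ⟪ptsE d i, ptsE d j⟫_ℝ *
            ((if 0 < ⟪ptsE d i, w⟫_ℝ then (1:ℝ) else 0) *
              (if 0 < ⟪w, ptsE d j⟫_ℝ then (1:ℝ) else 0)) * vv j ∂(sphereUniform d) :=
          (integral_finset_sum Finset.univ fun j _ => hFint j).symm
      _ = 0 := by
          refine integral_eq_zero_of_ae ?_
          filter_upwards [sphereUniform_ae d _ (ptsE_ne d hd 0),
            sphereUniform_ae d _ (ptsE_ne d hd 1), sphereUniform_ae d _ (ptsE_ne d hd 2),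
            sphereUniform_ae d _ (ptsE_ne d hd 3)] with w h0 h1 h2 h3
          exact pointwise_zero d i w h0 h1 h2 h3
  exact ⟨hvne, hmv, Matrix.exists_mulVec_eq_zero_iff.mp ⟨vv, hvne, hmv⟩⟩
end

section
/- Let d ≥ 3 and let x₁,…,x₈ ∈ ℝ^d be the special point set. Let m ≥ 1 and let w₁,…,w_m ∈ ℝ^d satisfy wᵢᵀxⱼ ≠ 0 for all 1 ≤ i ≤ m and 1 ≤ j ≤ 8 (a condition holding for almost every choice of unit-norm weights). Define the 8×8 matrix Ĝ by Ĝ_{jk} = (1/m) ∑_{i=1}^{m} xⱼᵀxₖ · 1_{xⱼᵀwᵢ>0} · 1_{xₖᵀwᵢ>0}, where 1_{z>0} equals 1 if z > 0 and 0 otherwise. Then Ĝv = 0 for the nonzero vector v = (1,−1,−1,−1,1,1,1,−1); in particular Ĝ is singular. -/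
open MeasureTheory Matrix
open scoped InnerProductSpace Matrix.Norms.L2Operator

lemma chi_flip {c : ℝ} (hc : c ≠ 0) :
    (if 0 < -c then (1:ℝ) else 0) = 1 - (if 0 < c then (1:ℝ) else 0) := by
  rcases hc.lt_or_gt with h | h
  · simp [neg_pos.2 h, h.not_gt]
  · simp [h, not_lt.2 (neg_nonpos.2 h.le)]

lemma pts_neg_of_sgn (d : ℕ) (a b : Fin 8) (h : ∀ s : Fin 3, sgn a s = - sgn b s) :
    pts d a = - pts d b := by
  funext t
  simp only [Pi.neg_apply, pts]
  split_ifs with ht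
  · rw [h]; ring
  · ring

lemma sgn0eq : sgn 0 = ![1,1,1] := rfl
lemma sgn1eq : sgn 1 = ![-1,1,1] := rfl
lemma sgn2eq : sgn 2 = ![1,-1,1] := rfl
lemma sgn3eq : sgn 3 = ![1,1,-1] := rfl
lemma sgn4eq : sgn 4 = ![-1,-1,1] := rfl
lemma sgn5eq : sgn 5 = ![-1,1,-1] := rfl
lemma sgn6eq : sgn 6 = ![1,-1,-1] := rfl
lemma sgn7eq : sgn 7 = ![-1,-1,-1] := rfl

lemma pts4 (d : ℕ) : pts d 4 = - pts d 3 :=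
  pts_neg_of_sgn d 4 3 (by intro s; fin_cases s <;> norm_num [sgn4eq, sgn3eq])


lemma pts5 (d : ℕ) : pts d 5 = - pts d 2 :=
  pts_neg_of_sgn d 5 2 (by intro s; fin_cases s <;> norm_num [sgn5eq, sgn2eq])

lemma pts6 (d : ℕ) : pts d 6 = - pts d 1 :=
  pts_neg_of_sgn d 6 1 (by intro s; fin_cases s <;> norm_num [sgn6eq, sgn1eq])

lemma pts7 (d : ℕ) : pts d 7 = - pts d 0 :=
  pts_neg_of_sgn d 7 0 (by intro s; fin_cases s <;> norm_num [sgn7eq, sgn0eq])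

lemma dot_pts (d : ℕ) (hd : 3 ≤ d) (j k : Fin 8) :
    pts d j ⬝ᵥ pts d k = (1/3) * ∑ t : Fin 3, sgn j t * sgn k t := by
  classical
  set emb : Fin 3 ↪ Fin d := ⟨Fin.castLE hd, Fin.castLE_injective hd⟩ with hemb
  have h0 : ∀ t ∈ (Finset.univ : Finset (Fin d)), t ∉ Finset.univ.map emb →
      pts d j t * pts d k t = 0 := by
    intro t _ ht
    have h3 : ¬ (t : ℕ) < 3 := by
      intro h
      exact ht (Finset.mem_map.2 ⟨⟨(t : ℕ), h⟩, Finset.mem_univ _, by ext; rfl⟩)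
    simp [pts, h3]
  have hsum := Finset.sum_subset (Finset.subset_univ (Finset.univ.map emb)) h0
  show ∑ t : Fin d, pts d j t * pts d k t = _
  rw [← hsum, Finset.sum_map, Finset.mul_sum]
  refine Finset.sum_congr rfl fun s _ => ?_
  have hs : ((emb s : Fin d) : ℕ) < 3 := s.2
  have hcoe : (⟨((emb s : Fin d) : ℕ), hs⟩ : Fin 3) = s := by ext; rfl
  simp only [pts, dif_pos hs, hcoe]
  have h3 : (1 / Real.sqrt 3) * (1 / Real.sqrt 3) = 1/3 := by
    rw [div_mul_div_comm, one_mul, Real.mul_self_sqrt] <;> norm_num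
  rw [← h3]; ring

lemma swap_helper {m : ℕ} (c : ℝ) (A : Fin m → Fin 8 → ℝ) (v : Fin 8 → ℝ) :
    ∑ k, (c * ∑ i, A i k) * v k = c * ∑ i, ∑ k, A i k * v k := by
  simp only [Finset.mul_sum, Finset.sum_mul, mul_assoc]
  exact Finset.sum_comm

/-- with the special point set and any weights `w₁,…,w_m` whose inner
products with all eight points are nonzero, the empirical NTK matrix
`Ĝ_{jk} = (1/m) ∑ᵢ xⱼᵀxₖ · 1_{xⱼᵀwᵢ>0} · 1_{xₖᵀwᵢ>0}` satisfies `Ĝv = 0` for the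
nonzero vector `v = (1,−1,−1,−1,1,1,1,−1)`; in particular `Ĝ` is singular. -/
theorem stmt_7 (d m : ℕ) (hd : 3 ≤ d) (hm : 1 ≤ m)
    (w : Fin m → Fin d → ℝ) (hw : ∀ (i : Fin m) (j : Fin 8), w i ⬝ᵥ pts d j ≠ 0)
    (G : Matrix (Fin 8) (Fin 8) ℝ)
    (hG : G = Matrix.of fun j k =>
      (1 / (m : ℝ)) * ∑ i, (pts d j ⬝ᵥ pts d k) *
        ((if 0 < pts d j ⬝ᵥ w i then (1 : ℝ) else 0) *
          (if 0 < pts d k ⬝ᵥ w i then (1 : ℝ) else 0))) :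
    vv ≠ 0 ∧ G.mulVec vv = 0 ∧ G.det = 0 := by
  have hv : vv ≠ 0 := by
    intro h
    have := congrFun h 0
    simp [vv] at this
  have hmul : G.mulVec vv = 0 := by
    subst hG
    funext j
    show ∑ k, ((1 / (m : ℝ)) * ∑ i, (pts d j ⬝ᵥ pts d k) *
        ((if 0 < pts d j ⬝ᵥ w i then (1 : ℝ) else 0) *
          (if 0 < pts d k ⬝ᵥ w i then (1 : ℝ) else 0))) * vv k = 0
    rw [swap_helper]
    have key : ∀ i : Fin m, ∑ k, (pts d j ⬝ᵥ pts d k) *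
        ((if 0 < pts d j ⬝ᵥ w i then (1 : ℝ) else 0) *
          (if 0 < pts d k ⬝ᵥ w i then (1 : ℝ) else 0)) * vv k = 0 := by
      intro i
      have hc : ∀ k : Fin 8, pts d k ⬝ᵥ w i ≠ 0 := fun k h =>
        hw i k (by rwa [dotProduct_comm] at h)
      have hD : pts d j ⬝ᵥ pts d 0 - pts d j ⬝ᵥ pts d 1 - pts d j ⬝ᵥ pts d 2
          - pts d j ⬝ᵥ pts d 3 = 0 := by
        rw [dot_pts d hd, dot_pts d hd, dot_pts d hd, dot_pts d hd]
        simp only [Fin.sum_univ_three, sgn0eq, sgn1eq, sgn2eq, sgn3eq,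
          Matrix.cons_val_zero, Matrix.cons_val_one, Matrix.head_cons,
          Matrix.cons_val_two, Matrix.tail_cons]
        ring
      rw [Fin.sum_univ_eight, pts4 d, pts5 d, pts6 d, pts7 d,
        dotProduct_neg, dotProduct_neg, dotProduct_neg,
        dotProduct_neg, neg_dotProduct, neg_dotProduct,
        neg_dotProduct, neg_dotProduct,
        chi_flip (hc 3), chi_flip (hc 2), chi_flip (hc 1), chi_flip (hc 0)]
      simp only [show vv 0 = 1 from rfl, show vv 1 = -1 from rfl,
        show vv 2 = -1 from rfl, show vv 3 = -1 from rfl, show vv 4 = 1 from rfl,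
        show vv 5 = 1 from rfl, show vv 6 = 1 from rfl, show vv 7 = -1 from rfl]
      linear_combination (if 0 < pts d j ⬝ᵥ w i then (1:ℝ) else 0) * hD
    simp only [key, Finset.sum_const_zero, mul_zero]
  exact ⟨hv, hmul, Matrix.exists_mulVec_eq_zero_iff.mp ⟨vv, hv, hmul⟩⟩
end

section
/- Let d ≥ 3 and let x₁,…,x₈ ∈ ℝ^d be the special point set. Let γ be the swish activation function γ(t) = t/(1 + e^{−t}), and define the 8×8 matrix H by H_{ij} = ∫_{S^{d−1}} γ(xᵢᵀw) γ(wᵀxⱼ) dσ(w). Then Hv = 0 for the nonzero vector v = (1,−1,−1,−1,1,1,1,−1); in particular H is singular. -/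
open MeasureTheory Matrix
open scoped InnerProductSpace Matrix.Norms.L2Operator

/-- The swish function satisfies `γ(t) − γ(−t) = t`. -/
lemma swish_odd_part (γ : ℝ → ℝ) (hγ : ∀ t, γ t = t / (1 + Real.exp (-t))) (t : ℝ) :
    γ t - γ (-t) = t := by
  rw [hγ, hγ, neg_neg]
  have h1 : (0:ℝ) < 1 + Real.exp (-t) := by positivity
  have h2 : (0:ℝ) < 1 + Real.exp t := by positivity
  have hA : Real.exp (-t) * Real.exp t = 1 := by
    rw [← Real.exp_add]; simp
  field_simp
  linear_combination (-t) * hA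

/-- The key cancellation. -/
lemma sum_vanish (γ : ℝ → ℝ) (hγ : ∀ t, γ t = t / (1 + Real.exp (-t))) (a b c : ℝ) :
    ∑ j : Fin 8, vv j * γ (sgn j 0 * a + sgn j 1 * b + sgn j 2 * c) = 0 := by
  have k1 := swish_odd_part γ hγ (a + b + c)
  have k2 := swish_odd_part γ hγ (-a + b + c)
  have k3 := swish_odd_part γ hγ (a + -b + c)
  have k4 := swish_odd_part γ hγ (a + b + -c)
  rw [show -(a + b + c) = -a + -b + -c from by ring] at k1
  rw [show -(-a + b + c) = a + -b + -c from by ring] at k2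
  rw [show -(a + -b + c) = -a + b + -c from by ring] at k3
  rw [show -(a + b + -c) = -a + -b + c from by ring] at k4
  simp only [Fin.sum_univ_succ, Fin.sum_univ_zero, vv, sgn, Matrix.cons_val_zero,
    Matrix.cons_val_succ, add_zero, Matrix.cons_val_one, Matrix.cons_val_two, Matrix.head_cons,
    Matrix.tail_cons]
  norm_num
  linarith [k1, k2, k3, k4]

lemma inner_ptsE (d : ℕ) (hd : 3 ≤ d) (w : EuclideanSpace ℝ (Fin d)) (j : Fin 8) :
    ⟪w, ptsE d j⟫_ℝ =
      sgn j 0 * ((1 / Real.sqrt 3) * w ⟨0, by omega⟩) +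
      sgn j 1 * ((1 / Real.sqrt 3) * w ⟨1, by omega⟩) +
      sgn j 2 * ((1 / Real.sqrt 3) * w ⟨2, by omega⟩) := by
  have : ⟪w, ptsE d j⟫_ℝ = ∑ k : Fin d, w k * pts d j k := by
    simp [PiLp.inner_apply, ptsE, RCLike.inner_apply]
    exact Finset.sum_congr rfl fun _ _ => mul_comm _ _
  rw [this]
  have hsub : ({⟨0, by omega⟩, ⟨1, by omega⟩, ⟨2, by omega⟩} : Finset (Fin d)) ⊆ Finset.univ :=
    Finset.subset_univ _
  rw [← Finset.sum_subset hsub (fun k _ hk => ?_)]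
  · rw [Finset.sum_insert (by simp [Fin.ext_iff]), Finset.sum_insert (by simp [Fin.ext_iff]),
      Finset.sum_singleton]
    simp only [pts]
    norm_num
    ring_nf
    congr 1
  · have hk3 : ¬ ((k : ℕ) < 3) := by
      simp [Finset.mem_insert, Fin.ext_iff] at hk
      omega
    simp [pts, hk3]

lemma sphereUniform_finite_s16 (d : ℕ) : IsFiniteMeasure (sphereUniform d) := by
  constructor
  rw [sphereUniform, Measure.map_apply (by fun_prop) MeasurableSet.univ]
  calc ((((volume : Measure (EuclideanSpace ℝ (Fin d))).toSphere Set.univ)⁻¹ •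
      (volume : Measure (EuclideanSpace ℝ (Fin d))).toSphere)) (Subtype.val ⁻¹' Set.univ)
      ≤ (((volume : Measure (EuclideanSpace ℝ (Fin d))).toSphere Set.univ)⁻¹ •
      (volume : Measure (EuclideanSpace ℝ (Fin d))).toSphere) Set.univ := measure_mono (by simp)
    _ ≤ 1 := by
        simp only [Measure.smul_apply, smul_eq_mul]
        exact ENNReal.inv_mul_le_one _
    _ < ⊤ := by simp

lemma swish_continuous (γ : ℝ → ℝ) (hγ : ∀ t, γ t = t / (1 + Real.exp (-t))) :
    Continuous γ := by
  have : γ = fun t => t / (1 + Real.exp (-t)) := funext hγ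
  rw [this]
  exact continuous_id.div (by continuity) (fun t => by positivity)

lemma integrable_term (d : ℕ) (γ : ℝ → ℝ) (hγ : ∀ t, γ t = t / (1 + Real.exp (-t)))
    (i j : Fin 8) :
    Integrable (fun w => γ ⟪ptsE d i, w⟫_ℝ * γ ⟪w, ptsE d j⟫_ℝ) (sphereUniform d) := by
  have hγc := swish_continuous γ hγ
  have hf : Continuous (fun w : EuclideanSpace ℝ (Fin d) =>
      γ ⟪ptsE d i, w⟫_ℝ * γ ⟪w, ptsE d j⟫_ℝ) := by
    apply Continuous.mul
    · exact hγc.comp (continuous_const.inner continuous_id)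
    · exact hγc.comp (continuous_id.inner continuous_const)
  rw [sphereUniform, (MeasurableEmbedding.subtype_coe (Metric.isClosed_sphere.measurableSet)).integrable_map_iff]
  haveI : IsFiniteMeasure (((volume : Measure (EuclideanSpace ℝ (Fin d))).toSphere Set.univ)⁻¹ •
      (volume : Measure (EuclideanSpace ℝ (Fin d))).toSphere) := by
    constructor
    simp only [Measure.smul_apply, smul_eq_mul]
    exact lt_of_le_of_lt (ENNReal.inv_mul_le_one _) (by simp)
  exact (hf.comp continuous_subtype_val).integrable_of_hasCompactSupport
    (HasCompactSupport.of_compactSpace _)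

/-- with the special point set and the swish activation
`γ(t) = t/(1 + e^{−t})`, the population matrix `H` satisfies `Hv = 0` for the
nonzero vector `v = (1,−1,−1,−1,1,1,1,−1)`; in particular `H` is singular. -/
theorem stmt_16 (d : ℕ) (hd : 3 ≤ d)
    (γ : ℝ → ℝ) (hγ : ∀ t, γ t = t / (1 + Real.exp (-t)))
    (H : Matrix (Fin 8) (Fin 8) ℝ)
    (hH : H = Matrix.of fun i j =>
      ∫ w, γ ⟪ptsE d i, w⟫_ℝ * γ ⟪w, ptsE d j⟫_ℝ ∂(sphereUniform d)) :
    vv ≠ 0 ∧ H.mulVec vv = 0 ∧ H.det = 0 := by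
  have hvv : vv ≠ 0 := by
    intro h
    have := congrFun h 0
    simp [vv] at this
  have hmul : H.mulVec vv = 0 := by
    funext i
    have hint : ∀ j : Fin 8, Integrable
        (fun w => vv j * (γ ⟪ptsE d i, w⟫_ℝ * γ ⟪w, ptsE d j⟫_ℝ)) (sphereUniform d) :=
      fun j => (integrable_term d γ hγ i j).const_mul _
    have : H.mulVec vv i = ∑ j : Fin 8,
        ∫ w, vv j * (γ ⟪ptsE d i, w⟫_ℝ * γ ⟪w, ptsE d j⟫_ℝ) ∂(sphereUniform d) := by
      rw [hH]
      simp only [Matrix.mulVec, dotProduct, Matrix.of_apply]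
      refine Finset.sum_congr rfl fun j _ => ?_
      rw [mul_comm, integral_const_mul]
    rw [this, ← integral_finset_sum _ (fun j _ => hint j)]
    have hzero : ∀ w : EuclideanSpace ℝ (Fin d),
        ∑ j : Fin 8, vv j * (γ ⟪ptsE d i, w⟫_ℝ * γ ⟪w, ptsE d j⟫_ℝ) = 0 := by
      intro w
      have : ∑ j : Fin 8, vv j * (γ ⟪ptsE d i, w⟫_ℝ * γ ⟪w, ptsE d j⟫_ℝ)
          = γ ⟪ptsE d i, w⟫_ℝ * ∑ j : Fin 8, vv j * γ ⟪w, ptsE d j⟫_ℝ := by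
        rw [Finset.mul_sum]; refine Finset.sum_congr rfl fun j _ => by ring
      rw [this]
      have := sum_vanish γ hγ ((1 / Real.sqrt 3) * w ⟨0, by omega⟩)
        ((1 / Real.sqrt 3) * w ⟨1, by omega⟩) ((1 / Real.sqrt 3) * w ⟨2, by omega⟩)
      rw [show ∑ j : Fin 8, vv j * γ ⟪w, ptsE d j⟫_ℝ = 0 from ?_, mul_zero]
      rw [← this]
      exact Finset.sum_congr rfl fun j _ => by rw [inner_ptsE d hd w j]
    simp only [hzero]
    simp [Pi.zero_apply]
  refine ⟨hvv, hmul, ?_⟩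
  exact Matrix.exists_mulVec_eq_zero_iff.mp ⟨vv, hvv, hmul⟩
end
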